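/- On a Polish space S, the class of functions F : P(S) → ℝ of the form F(ν) = κ(∫f₁ dν, ..., ∫f_p dν), where p ∈ ℕ, f₁,...,f_p are bounded measurable functions on S, and κ : ℝ^p → ℝ is convex, is measure-determining on the space P(S) of Borel probability measures: if two Borel probability measures m, m' on P(S) satisfy ∫F dm = ∫F dm' for all such F, then m = m'. -/

import Mathlib

open MeasureTheory ProbabilityTheory

noncomputable section StmtAux

variable {k : ℕ}

def expFn (a : Fin k → ℝ) : (Fin k → ℝ) → ℝ :=
  fun y => Real.exp (∑ i, a i * y i)

lemma continuous_expFn (a : Fin k → ℝ) : Continuous (expFn a) :=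
  Real.continuous_exp.comp (continuous_finset_sum _ fun i _ =>
    continuous_const.mul (continuous_apply i))

/-- The linear functional `y ↦ ∑ a i * y i`. -/
def linFn (a : Fin k → ℝ) : (Fin k → ℝ) →ₗ[ℝ] ℝ where
  toFun := fun y => ∑ i, a i * y i
  map_add' := by
    intro x y
    simp [mul_add, Finset.sum_add_distrib]
  map_smul' := by
    intro c y
    simp [Finset.mul_sum, smul_eq_mul, mul_left_comm]

lemma convexOn_expFn (a : Fin k → ℝ) : ConvexOn ℝ Set.univ (expFn a) := by
  constructor
  · exact convex_univ
  · intro x _ y _ s t hs ht hst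
    have h2 := convexOn_exp.2 (Set.mem_univ (linFn a x)) (Set.mem_univ (linFn a y)) hs ht hst
    have e : expFn a (s • x + t • y) = Real.exp (s • linFn a x + t • linFn a y) := by
      rw [← (linFn a).map_smul, ← (linFn a).map_smul, ← (linFn a).map_add]
      rfl
    rw [e]
    simp only [smul_eq_mul] at h2 ⊢
    exact h2

/-- Two probability measures supported on the cube `[-1,1]^k` that give the same integral
to every exponential of a linear functional are equal. -/
lemma eq_of_integral_expFn_eq (μ μ' : Measure (Fin k → ℝ))
    [IsProbabilityMeasure μ] [IsProbabilityMeasure μ']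
    (hμ : μ (Set.Icc (fun _ => (-1:ℝ)) fun _ => 1)ᶜ = 0)
    (hμ' : μ' (Set.Icc (fun _ => (-1:ℝ)) fun _ => 1)ᶜ = 0)
    (h : ∀ a : Fin k → ℝ, ∫ y, expFn a y ∂μ = ∫ y, expFn a y ∂μ') :
    μ = μ' := by
  set K : Set (Fin k → ℝ) := Set.Icc (fun _ => (-1:ℝ)) (fun _ => 1) with hK
  have hKcl : IsClosed K := isClosed_Icc
  have hKm : MeasurableSet K := hKcl.measurableSet
  have hKc : IsCompact K := isCompact_Icc
  haveI : CompactSpace K := isCompact_iff_compactSpace.mp hKc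
  have hemb : MeasurableEmbedding ((↑) : K → (Fin k → ℝ)) :=
    MeasurableEmbedding.subtype_coe hKm
  set ρ : Measure K := Measure.comap (↑) μ with hρ
  set ρ' : Measure K := Measure.comap (↑) μ' with hρ'
  have hmap : Measure.map (↑) ρ = μ := by
    rw [hρ, hemb.map_comap, Subtype.range_coe]
    exact Measure.restrict_eq_self_of_ae_mem (by
      rw [ae_iff]
      convert hμ using 2; rfl)
  have hmap' : Measure.map (↑) ρ' = μ' := by
    rw [hρ', hemb.map_comap, Subtype.range_coe]
    exact Measure.restrict_eq_self_of_ae_mem (by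
      rw [ae_iff]
      convert hμ' using 2; rfl)
  haveI : IsProbabilityMeasure ρ := by
    constructor
    have h1 : (Measure.map (Subtype.val : K → (Fin k → ℝ)) ρ) Set.univ = 1 := by
      rw [hmap]; exact measure_univ
    rwa [Measure.map_apply hemb.measurable MeasurableSet.univ, Set.preimage_univ] at h1
  haveI : IsProbabilityMeasure ρ' := by
    constructor
    have h1 : (Measure.map (Subtype.val : K → (Fin k → ℝ)) ρ') Set.univ = 1 := by
      rw [hmap']; exact measure_univ
    rwa [Measure.map_apply hemb.measurable MeasurableSet.univ, Set.preimage_univ] at h1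
  -- the generators
  set gen : (Fin k → ℝ) → C(K, ℝ) := fun a =>
    ⟨fun y => expFn a (y : Fin k → ℝ), (continuous_expFn a).comp continuous_subtype_val⟩
    with hgen
  -- every continuous function on K integrates equally against ρ and ρ'
  have hint : ∀ (τ : Measure K) [IsProbabilityMeasure τ] (f : C(K, ℝ)),
      Integrable f τ := by
    intro τ _ f
    exact (BoundedContinuousFunction.mkOfCompact f).integrable τ
  have hbase : ∀ a, ∫ x, gen a x ∂ρ = ∫ x, gen a x ∂ρ' := by
    intro a
    have e1 : ∫ x, gen a x ∂ρ = ∫ y, expFn a y ∂μ := by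
      rw [← hmap, integral_map hemb.measurable.aemeasurable
        ((continuous_expFn a).aestronglyMeasurable)]
      rfl
    have e2 : ∫ x, gen a x ∂ρ' = ∫ y, expFn a y ∂μ' := by
      rw [← hmap', integral_map hemb.measurable.aemeasurable
        ((continuous_expFn a).aestronglyMeasurable)]
      rfl
    rw [e1, e2]; exact h a
  -- everything in the monoid closure of the generators is a generator
  have hmono : ∀ g ∈ Submonoid.closure (Set.range gen), ∃ a, g = gen a := by
    intro g hg
    induction hg using Submonoid.closure_induction with
    | mem x hx => obtain ⟨a, rfl⟩ := hx; exact ⟨a, rfl⟩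
    | one =>
        refine ⟨0, ?_⟩
        ext y
        simp [hgen, expFn]
    | mul x y _ _ hx hy =>
        obtain ⟨a, rfl⟩ := hx
        obtain ⟨b, rfl⟩ := hy
        refine ⟨a + b, ?_⟩
        ext z
        simp [hgen, expFn, ← Real.exp_add, add_mul, Finset.sum_add_distrib]
  -- the set of functions integrating equally
  set P : Set C(K, ℝ) := {f | ∫ x, f x ∂ρ = ∫ x, f x ∂ρ'} with hP
  have hspan : ∀ f ∈ Submodule.span ℝ ((Submonoid.closure (Set.range gen) : Submonoid C(K, ℝ)) :
      Set C(K, ℝ)), f ∈ P := by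
    intro f hf'
    induction hf' using Submodule.span_induction with
    | mem g hg => obtain ⟨a, rfl⟩ := hmono g hg; exact hbase a
    | zero => simp [hP]
    | add f g _ _ hfP hgP =>
        simp only [hP, Set.mem_setOf_eq, ContinuousMap.coe_add, Pi.add_apply] at hfP hgP ⊢
        rw [integral_add (hint ρ f) (hint ρ g), integral_add (hint ρ' f) (hint ρ' g), hfP, hgP]
    | smul c f _ hfP =>
        simp only [hP, Set.mem_setOf_eq, ContinuousMap.coe_smul, Pi.smul_apply,
          smul_eq_mul] at hfP ⊢
        rw [integral_const_mul, integral_const_mul, hfP]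
  have hPA : ∀ f ∈ Algebra.adjoin ℝ (Set.range gen), f ∈ P := by
    intro f hf
    refine hspan f ?_
    rw [← Algebra.adjoin_eq_span]; exact hf
  have hPclosed : IsClosed P := by
    have c1 : ∀ (τ : Measure K) [IsProbabilityMeasure τ],
        Continuous fun f : C(K, ℝ) => ∫ x, f x ∂τ := by
      intro τ _
      refine (LipschitzWith.of_dist_le_mul (K := 1) fun f g => ?_).continuous
      rw [dist_eq_norm, ← integral_sub (hint τ f) (hint τ g)]
      calc ‖∫ x, (f x - g x) ∂τ‖ ≤ dist f g * (τ Set.univ).toReal := by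
            refine norm_integral_le_of_norm_le_const (Filter.Eventually.of_forall fun x => ?_)
            rw [← dist_eq_norm]
            exact ContinuousMap.dist_apply_le_dist x
        _ ≤ 1 * dist f g := by simp
    exact isClosed_eq (c1 ρ) (c1 ρ')
  -- separation of points
  have hsep : (Algebra.adjoin ℝ (Set.range gen)).SeparatesPoints := by
    intro x y hxy
    have : ∃ i, (x : Fin k → ℝ) i ≠ (y : Fin k → ℝ) i := by
      by_contra hc
      push_neg at hc
      exact hxy (Subtype.ext (funext hc))
    obtain ⟨i, hi⟩ := this
    refine ⟨gen (Pi.single i 1), ⟨gen (Pi.single i 1),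
      Algebra.subset_adjoin ⟨Pi.single i 1, rfl⟩, rfl⟩, ?_⟩
    simp only [hgen, ContinuousMap.coe_mk, expFn]
    have e : ∀ v : Fin k → ℝ, ∑ j, (Pi.single i (1:ℝ) : Fin k → ℝ) j * v j = v i := by
      intro v
      rw [Finset.sum_eq_single i]
      · simp
      · intro b _ hb; simp [Pi.single_apply, hb]
      · intro hb; exact absurd (Finset.mem_univ i) hb
    rw [e, e]
    exact fun hc => hi (Real.exp_injective hc)
  have htop := ContinuousMap.subalgebra_topologicalClosure_eq_top_of_separatesPoints
    (Algebra.adjoin ℝ (Set.range gen)) hsep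
  have hkey : ∀ f : C(K, ℝ), ∫ x, f x ∂ρ = ∫ x, f x ∂ρ' := by
    intro f
    have hf : f ∈ closure ((Algebra.adjoin ℝ (Set.range gen) : Subalgebra ℝ C(K, ℝ)) :
        Set C(K, ℝ)) := by
      have : f ∈ (Algebra.adjoin ℝ (Set.range gen)).topologicalClosure := by
        rw [htop]; trivial
      exact this
    exact closure_minimal hPA hPclosed hf
  -- conclude
  have hρρ' : ρ = ρ' := by
    apply ext_of_forall_lintegral_eq_of_IsFiniteMeasure
    intro f
    have hi : Integrable (fun x => (f x : ℝ)) ρ := f.integrable_of_nnreal ρ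
    have hi' : Integrable (fun x => (f x : ℝ)) ρ' := f.integrable_of_nnreal ρ'
    rw [lintegral_coe_eq_integral f hi, lintegral_coe_eq_integral f hi']
    congr 1
    exact hkey ⟨fun x => (f x : ℝ), NNReal.continuous_coe.comp f.continuous⟩
  rw [← hmap, ← hmap', hρρ']

end StmtAux

open scoped ENNReal

/-- on a Polish space S, functions F(ν) = κ(∫f₁dν,…,∫f_p dν) with the
f_i bounded measurable and κ convex are measure-determining on P(S): if two Borel
probability measures m, m' on P(S) integrate all such F equally, then m = m'. -/
theorem stmt14 {S : Type*} [MeasurableSpace S] [TopologicalSpace S] [PolishSpace S]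
    [BorelSpace S]
    (m m' : Measure (Measure S)) [IsProbabilityMeasure m] [IsProbabilityMeasure m']
    (hm : ∀ᵐ ν ∂m, IsProbabilityMeasure ν) (hm' : ∀ᵐ ν ∂m', IsProbabilityMeasure ν)
    (h : ∀ (p : ℕ) (f : Fin p → S → ℝ),
      (∀ i, Measurable (f i)) → (∀ i, ∃ C, ∀ x, |f i x| ≤ C) →
      ∀ κ : (Fin p → ℝ) → ℝ, ConvexOn ℝ Set.univ κ →
        ∫ ν, κ (fun i => ∫ x, f i x ∂ν) ∂m = ∫ ν, κ (fun i => ∫ x, f i x ∂ν) ∂m') :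
    m = m' := by
  classical
  -- the π-system of cylinder sets
  set C : Set (Set (Measure S)) :=
    {E | ∃ (k : ℕ) (s : Fin k → Set S), (∀ i, MeasurableSet (s i)) ∧
      ∃ B : Set (Fin k → ℝ≥0∞), MeasurableSet B ∧ E = (fun ν i => ν (s i)) ⁻¹' B} with hC
  -- the σ-algebra on measures is generated by C
  have hgen : (Measure.instMeasurableSpace : MeasurableSpace (Measure S)) =
      MeasurableSpace.generateFrom C := by
    have hmeas : ∀ s : Set S, MeasurableSet s →
        Measurable[MeasurableSpace.generateFrom C] (fun ν : Measure S => ν s) := by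
      intro s hs t ht
      apply MeasurableSpace.measurableSet_generateFrom
      refine ⟨1, fun _ => s, fun _ => hs, (fun y : Fin 1 → ℝ≥0∞ => y 0) ⁻¹' t,
        (measurable_pi_apply 0) ht, ?_⟩
      ext ν
      simp
    refine le_antisymm (fun t ht => ?_) (MeasurableSpace.generateFrom_le ?_)
    · have hid : Measurable[MeasurableSpace.generateFrom C, Measure.instMeasurableSpace]
          (id : Measure S → Measure S) :=
        @Measure.measurable_of_measurable_coe S (Measure S) _ (MeasurableSpace.generateFrom C)
          id hmeas
      exact hid ht
    · rintro E ⟨k, s, hs, B, hB, rfl⟩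
      exact (measurable_pi_lambda _ fun i => Measure.measurable_coe (hs i)) hB
  -- C is a π-system
  have hpi : IsPiSystem C := by
    rintro E₁ ⟨k₁, s₁, hs₁, B₁, hB₁, rfl⟩ E₂ ⟨k₂, s₂, hs₂, B₂, hB₂, rfl⟩ -
    refine ⟨k₁ + k₂, Fin.addCases s₁ s₂, ?_, ?_⟩
    · intro i
      refine Fin.addCases (motive := fun i => MeasurableSet (Fin.addCases s₁ s₂ i)) ?_ ?_ i
      · intro j; rw [Fin.addCases_left]; exact hs₁ j
      · intro j; rw [Fin.addCases_right]; exact hs₂ j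
    · refine ⟨(fun y : Fin (k₁ + k₂) → ℝ≥0∞ => fun i => y (Fin.castAdd k₂ i)) ⁻¹' B₁ ∩
        (fun y : Fin (k₁ + k₂) → ℝ≥0∞ => fun i => y (Fin.natAdd k₁ i)) ⁻¹' B₂, ?_, ?_⟩
      · exact ((measurable_pi_lambda _ fun i => measurable_pi_apply _) hB₁).inter
          ((measurable_pi_lambda _ fun i => measurable_pi_apply _) hB₂)
      · ext ν
        have e1 : (fun i => ν (Fin.addCases s₁ s₂ (Fin.castAdd k₂ i))) = fun i => ν (s₁ i) :=
          funext fun i => by rw [Fin.addCases_left]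
        have e2 : (fun i => ν (Fin.addCases s₁ s₂ (Fin.natAdd k₁ i))) = fun i => ν (s₂ i) :=
          funext fun i => by rw [Fin.addCases_right]
        simp only [Set.mem_inter_iff, Set.mem_preimage, e1, e2]
  -- m and m' agree on C
  refine MeasureTheory.ext_of_generate_finite C hgen hpi ?_ (by simp)
  rintro E ⟨k, s, hs, B, hB, rfl⟩
  -- the ℝ≥0∞-valued and ℝ-valued evaluation maps
  set Y : Measure S → (Fin k → ℝ≥0∞) := fun ν i => ν (s i) with hY
  set X : Measure S → (Fin k → ℝ) := fun ν i => (ν (s i)).toReal with hX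
  set φ : (Fin k → ℝ) → (Fin k → ℝ≥0∞) := fun x i => ENNReal.ofReal (x i) with hφ
  have hYm : Measurable Y := measurable_pi_lambda _ fun i => Measure.measurable_coe (hs i)
  have hXm : Measurable X := measurable_pi_lambda _ fun i =>
    ENNReal.measurable_toReal.comp (Measure.measurable_coe (hs i))
  have hφm : Measurable φ := measurable_pi_lambda _ fun i =>
    ENNReal.measurable_ofReal.comp (measurable_pi_apply i)
  -- the indicator functions
  set f : Fin k → S → ℝ := fun i => (s i).indicator (fun _ => (1:ℝ)) with hf
  have hfm : ∀ i, Measurable (f i) := fun i => measurable_const.indicator (hs i)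
  have hfb : ∀ i, ∃ C, ∀ x, |f i x| ≤ C := by
    intro i
    refine ⟨1, fun x => ?_⟩
    rw [hf]
    simp only [Set.indicator_apply]
    split <;> norm_num
  -- a.e. identification of the integrals of the indicators
  have haeX : ∀ (μ0 : Measure (Measure S)), (∀ᵐ ν ∂μ0, IsProbabilityMeasure ν) →
      ∀ κ : (Fin k → ℝ) → ℝ,
      ∫ ν, κ (fun i => ∫ x, f i x ∂ν) ∂μ0 = ∫ ν, κ (X ν) ∂μ0 := by
    intro μ0 hμ0 κ
    refine integral_congr_ae ?_
    filter_upwards [hμ0] with ν hν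
    congr 1
    funext i
    rw [hf]
    simp only
    rw [integral_indicator_const (1:ℝ) (hs i), smul_eq_mul, mul_one, hX]
    rfl
  -- the pushforwards of X agree, by the exponential-moments lemma
  have hXmap : Measure.map X m = Measure.map X m' := by
    haveI : IsProbabilityMeasure (Measure.map X m) :=
      Measure.isProbabilityMeasure_map hXm.aemeasurable
    haveI : IsProbabilityMeasure (Measure.map X m') :=
      Measure.isProbabilityMeasure_map hXm.aemeasurable
    have hKm : MeasurableSet (Set.Icc (fun _ : Fin k => (-1:ℝ)) fun _ => 1) :=
      (isClosed_Icc).measurableSet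
    have hsupp : ∀ (μ0 : Measure (Measure S)), (∀ᵐ ν ∂μ0, IsProbabilityMeasure ν) →
        Measure.map X μ0 (Set.Icc (fun _ : Fin k => (-1:ℝ)) fun _ => 1)ᶜ = 0 := by
      intro μ0 hμ0
      rw [Measure.map_apply hXm hKm.compl]
      have : ∀ᵐ ν ∂μ0, X ν ∈ Set.Icc (fun _ : Fin k => (-1:ℝ)) fun _ => 1 := by
        filter_upwards [hμ0] with ν hν
        haveI := hν
        constructor
        · intro i
          have := ENNReal.toReal_nonneg (a := ν (s i))
          rw [hX]; simp only; linarith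
        · intro i
          rw [hX]
          simp only
          have h1 : ν (s i) ≤ 1 := prob_le_one
          calc (ν (s i)).toReal ≤ (1 : ℝ≥0∞).toReal :=
                ENNReal.toReal_mono (by simp) h1
            _ = 1 := by simp
      rw [ae_iff] at this
      convert this using 2
      rfl
    refine eq_of_integral_expFn_eq _ _ (hsupp m hm) (hsupp m' hm') ?_
    intro a
    have hκ : ConvexOn ℝ Set.univ (expFn a) := convexOn_expFn a
    have e1 : ∫ y, expFn a y ∂(Measure.map X m) = ∫ ν, expFn a (X ν) ∂m :=
      integral_map hXm.aemeasurable (continuous_expFn a).aestronglyMeasurable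
    have e2 : ∫ y, expFn a y ∂(Measure.map X m') = ∫ ν, expFn a (X ν) ∂m' :=
      integral_map hXm.aemeasurable (continuous_expFn a).aestronglyMeasurable
    rw [e1, e2, ← haeX m hm (expFn a), ← haeX m' hm' (expFn a)]
    exact h k f hfm hfb (expFn a) hκ
  -- transfer to the ℝ≥0∞-valued evaluations
  have hYmap : ∀ (μ0 : Measure (Measure S)), (∀ᵐ ν ∂μ0, IsProbabilityMeasure ν) →
      Measure.map Y μ0 = Measure.map φ (Measure.map X μ0) := by
    intro μ0 hμ0
    rw [Measure.map_map hφm hXm]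
    refine Measure.map_congr ?_
    filter_upwards [hμ0] with ν hν
    haveI := hν
    funext i
    rw [hY, hφ, hX]
    simp only [Function.comp_apply]
    exact (ENNReal.ofReal_toReal (measure_ne_top ν (s i))).symm
  have hYeq : Measure.map Y m = Measure.map Y m' := by
    rw [hYmap m hm, hYmap m' hm', hXmap]
  calc m ((fun ν i => ν (s i)) ⁻¹' B) = Measure.map Y m B :=
        (Measure.map_apply hYm hB).symm
    _ = Measure.map Y m' B := by rw [hYeq]
    _ = m' ((fun ν i => ν (s i)) ⁻¹' B) := Measure.map_apply hYm hB
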